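/- Let C ∈ ℝ^{d×d} be symmetric positive definite and M ∈ ℝ^{d×d}. Then the supremum of tr(A·M) over all A ∈ ℝ^{d×d} satisfying A C Aᵀ = I_d equals the sum of the singular values of C^{−1/2} M, and the supremum is attained (namely by A = V Uᵀ C^{−1/2}, where C^{−1/2} M = U Σ Vᵀ is a singular value decomposition). -/

import Mathlib

open scoped BigOperators
open Matrix
open scoped MatrixOrder

noncomputable def singularValues {m n : Type*} [Fintype m] [Fintype n] [DecidableEq n]
    (M : Matrix m n ℝ) : n → ℝ :=
  fun i => Real.sqrt ((Matrix.isHermitian_conjTranspose_mul_self M).eigenvalues i)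

lemma trace_psd_sqrt {n : Type*} [Fintype n] [DecidableEq n] {A : Matrix n n ℝ}
    (hA : A.PosSemidef) :
    (CFC.sqrt A).trace = ∑ i, Real.sqrt (hA.1.eigenvalues i) := by
  rw [CFC.sqrt_eq_cfc, cfc_nnreal_eq_real _ A, hA.1.cfc_eq, Matrix.IsHermitian.cfc,
    Unitary.conjStarAlgAut_apply, Matrix.trace_mul_cycle,
    Unitary.coe_star_mul_self, Matrix.one_mul, Matrix.trace_diagonal]
  simp [max_eq_left (hA.eigenvalues_nonneg _)]

lemma sum_sv {n : Type*} [Fintype n] [DecidableEq n]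
    (N U V : Matrix n n ℝ) (f : n → ℝ)
    (hUU : Uᵀ * U = 1) (hVV : Vᵀ * V = 1) (hf : ∀ i, 0 ≤ f i)
    (hSVD : N = U * diagonal f * Vᵀ) :
    ∑ i, singularValues N i = ∑ i, f i := by
  have hH : (Nᵀ * N).PosSemidef := by
    simpa [Matrix.conjTranspose_eq_transpose_of_trivial] using
      Matrix.posSemidef_conjTranspose_mul_self N
  have hcV : ∀ X : Matrix n n ℝ, Vᵀ * (V * X) = X := fun X => by
    rw [← Matrix.mul_assoc, hVV, Matrix.one_mul]
  have hcU : ∀ X : Matrix n n ℝ, Uᵀ * (U * X) = X := fun X => by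
    rw [← Matrix.mul_assoc, hUU, Matrix.one_mul]
  have hP : (V * diagonal f * Vᵀ).PosSemidef := by
    have := (Matrix.posSemidef_diagonal_iff.mpr hf).mul_mul_conjTranspose_same V
    simpa [Matrix.conjTranspose_eq_transpose_of_trivial] using this
  have hP2 : (V * diagonal f * Vᵀ) ^ 2 = Nᵀ * N := by
    subst hSVD
    simp only [pow_two, Matrix.transpose_mul, Matrix.transpose_transpose,
      Matrix.diagonal_transpose, Matrix.mul_assoc, hcV, hcU]
  have hsq : V * diagonal f * Vᵀ = CFC.sqrt (Nᵀ * N) :=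
    ((CFC.sqrt_eq_iff _ _ hH.nonneg hP.nonneg).mpr (by rw [← sq]; exact hP2)).symm
  have h1 : ∑ i, singularValues N i = (CFC.sqrt (Nᵀ * N)).trace := by
    rw [trace_psd_sqrt hH]; rfl
  rw [h1, ← hsq, Matrix.trace_mul_cycle, hVV, Matrix.one_mul, Matrix.trace_diagonal]

theorem trace_max_over_C_orthogonal
    {d : ℕ} (C M R : Matrix (Fin d) (Fin d) ℝ)
    (hC : C.PosDef) (hR : R.PosDef) (hRC : R * R = C)
    (U Sig V : Matrix (Fin d) (Fin d) ℝ)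
    (hU : U * Uᵀ = 1) (hV : V * Vᵀ = 1)
    (hSigdiag : ∀ i j, i ≠ j → Sig i j = 0) (hSignonneg : ∀ i, 0 ≤ Sig i i)
    (hSVD : R⁻¹ * M = U * Sig * Vᵀ) :
    IsGreatest {t : ℝ | ∃ A : Matrix (Fin d) (Fin d) ℝ, A * C * Aᵀ = 1 ∧ t = (A * M).trace}
      (∑ i, singularValues (R⁻¹ * M) i) ∧
    ((V * Uᵀ * R⁻¹) * M).trace = ∑ i, singularValues (R⁻¹ * M) i ∧
    (V * Uᵀ * R⁻¹) * C * (V * Uᵀ * R⁻¹)ᵀ = 1 := by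
  have hRdet : IsUnit R.det := (Matrix.isUnit_iff_isUnit_det R).mp hR.isUnit
  have hRT : Rᵀ = R := by
    rw [← Matrix.conjTranspose_eq_transpose_of_trivial, hR.1]
  have hRiT : (R⁻¹)ᵀ = R⁻¹ := by rw [Matrix.transpose_nonsing_inv, hRT]
  have hUU : Uᵀ * U = 1 := mul_eq_one_comm.mp hU
  have hVV : Vᵀ * V = 1 := mul_eq_one_comm.mp hV
  set f : Fin d → ℝ := fun i => Sig i i with hf
  have hSig : Sig = diagonal f := by
    ext i j
    by_cases h : i = j
    · subst h; simp [Matrix.diagonal_apply_eq, hf]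
    · rw [Matrix.diagonal_apply_ne _ h]; exact hSigdiag i j h
  have hcU : ∀ X : Matrix (Fin d) (Fin d) ℝ, Uᵀ * (U * X) = X := fun X => by
    rw [← Matrix.mul_assoc, hUU, Matrix.one_mul]
  have hcUt : ∀ X : Matrix (Fin d) (Fin d) ℝ, U * (Uᵀ * X) = X := fun X => by
    rw [← Matrix.mul_assoc, hU, Matrix.one_mul]
  have hcR : ∀ X : Matrix (Fin d) (Fin d) ℝ, R⁻¹ * (R * X) = X := fun X => by
    rw [← Matrix.mul_assoc, Matrix.nonsing_inv_mul R hRdet, Matrix.one_mul]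
  have hcR' : ∀ X : Matrix (Fin d) (Fin d) ℝ, R * (R⁻¹ * X) = X := fun X => by
    rw [← Matrix.mul_assoc, Matrix.mul_nonsing_inv R hRdet, Matrix.one_mul]
  have hsum : ∑ i, singularValues (R⁻¹ * M) i = ∑ i, f i :=
    sum_sv _ U V f hUU hVV hSignonneg (by rw [hSVD, hSig])
  -- the constraint for the maximizer
  have hcon : (V * Uᵀ * R⁻¹) * C * (V * Uᵀ * R⁻¹)ᵀ = 1 := by
    rw [← hRC]
    simp only [Matrix.transpose_mul, Matrix.transpose_transpose, hRiT, Matrix.mul_assoc,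
      hcR, hcR', hcU]
    exact hV
  -- value of the maximizer
  have hval : ((V * Uᵀ * R⁻¹) * M).trace = ∑ i, f i := by
    have h1 : (V * Uᵀ * R⁻¹) * M = V * Sig * Vᵀ := by
      rw [Matrix.mul_assoc (V * Uᵀ) R⁻¹ M, hSVD]
      simp only [Matrix.mul_assoc, hcU]
    rw [h1, Matrix.trace_mul_cycle, hVV, Matrix.one_mul, hSig, Matrix.trace_diagonal]
  refine ⟨⟨⟨V * Uᵀ * R⁻¹, hcon, by rw [hsum]; exact hval.symm⟩, ?_⟩, by rw [hsum]; exact hval, hcon⟩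
  rintro t ⟨A, hA, rfl⟩
  rw [hsum]
  have hAM : A * M = (A * R) * (U * Sig * Vᵀ) := by
    rw [← hSVD, Matrix.mul_assoc A R, hcR']
  set B := A * R with hBdef
  have hB : B * Bᵀ = 1 := by
    calc B * Bᵀ = A * R * (Rᵀ * Aᵀ) := by rw [hBdef, Matrix.transpose_mul]
      _ = A * C * Aᵀ := by rw [hRT, ← hRC]; simp only [Matrix.mul_assoc]
      _ = 1 := hA
  have hBB : Bᵀ * B = 1 := mul_eq_one_comm.mp hB
  have hcBt : ∀ X : Matrix (Fin d) (Fin d) ℝ, B * (Bᵀ * X) = X := fun X => by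
    rw [← Matrix.mul_assoc, hB, Matrix.one_mul]
  set W := Vᵀ * B * U with hWdef
  have hW : W * Wᵀ = 1 := by
    rw [hWdef]
    simp only [Matrix.transpose_mul, Matrix.transpose_transpose, Matrix.mul_assoc,
      hcUt, hcBt]
    exact hVV
  have htr : (A * M).trace = (W * Sig).trace := by
    rw [hAM, ← Matrix.mul_assoc, ← Matrix.mul_assoc, Matrix.trace_mul_comm, hWdef,
      ← Matrix.mul_assoc, ← Matrix.mul_assoc]
  rw [htr, hSig]
  have htr2 : (W * diagonal f).trace = ∑ i, W i i * f i := by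
    simp [Matrix.trace, Matrix.diag, Matrix.mul_diagonal]
  rw [htr2]
  apply Finset.sum_le_sum
  intro i _
  have hsq : W i i ^ 2 ≤ 1 := by
    have h1 : ∑ j, W i j * W i j = 1 := by
      have := congrFun (congrFun hW i) i
      simpa [Matrix.mul_apply, Matrix.transpose_apply, Matrix.one_apply] using this
    have h2 := Finset.single_le_sum (f := fun j => W i j * W i j)
      (fun j _ => mul_self_nonneg _) (Finset.mem_univ i)
    rw [h1] at h2
    rw [sq]
    exact h2
  have hWle : W i i ≤ 1 := by nlinarith [sq_nonneg (W i i - 1)]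
  calc W i i * f i ≤ 1 * f i := mul_le_mul_of_nonneg_right hWle (hSignonneg i)
    _ = f i := one_mul _
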